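/- arXiv:0901.4221 — 4 statements merged into one kernel-verified Lean document; each statement's English description precedes it below -/
import Mathlib

section
/- For all s, s' ∈ {1,…,p}, the sets I_{s,s'} and J_{s,s'} are disjoint. -/
/-- The index set `I_{s,s'} = {s'-s+2i-1 : i = 1,…,s, s'-s+2i-1 ≤ 2p-s-s'}` (for `s ≤ s'`),
extended symmetrically to all pairs. -/
def Iset (p s s' : ℕ) : Finset ℕ :=
  ((Finset.Icc 1 (min s s')).image fun i => max s s' - min s s' + 2 * i - 1).filter
    fun t => t ≤ 2 * p - s - s'

/-- The index set `J_{s,s'} = {2p-2i-s'+s+1 : i = 1,…,s, 2p-2i-s'+s+1 ≤ p}` (for `s ≤ s'`),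
extended symmetrically to all pairs. -/
def Jset (p s s' : ℕ) : Finset ℕ :=
  ((Finset.Icc 1 (min s s')).image fun i => 2 * p + min s s' + 1 - 2 * i - max s s').filter
    fun t => t ≤ p


/-- For all `s, s' ∈ {1,…,p}`, the sets `I_{s,s'}` and `J_{s,s'}` are disjoint. -/
theorem Iset_disjoint_Jset (p : ℕ) (hp : 2 ≤ p) (s s' : ℕ)
    (hs : 1 ≤ s) (hsp : s ≤ p) (hs' : 1 ≤ s') (hs'p : s' ≤ p) :
    Disjoint (Iset p s s') (Jset p s s') := by
  rw [Finset.disjoint_left]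
  intro a haI haJ
  simp only [Iset, Jset, Finset.mem_filter, Finset.mem_image, Finset.mem_Icc] at haI haJ
  obtain ⟨⟨i, ⟨hi1, hi2⟩, hia⟩, haL⟩ := haI
  obtain ⟨⟨j, ⟨hj1, hj2⟩, hja⟩, haP⟩ := haJ
  omega
end

section
/- For s ∈ {1,…,p-1} and s' ∈ {1,…,p}, one has I_{p-s,s'} = {p - t : t ∈ I_{s,s'}}, and I_{p,s'} = ∅. -/
lemma mem_Iset_iff (p s s' t : ℕ) :
    t ∈ Iset p s s' ↔
      (t + s + s') % 2 = 1 ∧ max s s' + 1 ≤ t + min s s' ∧ t + 1 ≤ s + s' ∧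
        t + s + s' ≤ 2 * p := by
  simp only [Iset, Finset.mem_filter, Finset.mem_image, Finset.mem_Icc]
  constructor
  · rintro ⟨⟨i, ⟨h1, h2⟩, rfl⟩, h4⟩
    omega
  · rintro ⟨h1, h2, h3, h4⟩
    exact ⟨⟨(t + min s s' + 1 - max s s') / 2, by omega, by omega⟩, by omega⟩

/-- For `s ∈ {1,…,p-1}` and `s' ∈ {1,…,p}`, `I_{p-s,s'} = {p - t : t ∈ I_{s,s'}}`,
and `I_{p,s'} = ∅`. -/
theorem Iset_reflect (p : ℕ) (hp : 2 ≤ p) (s s' : ℕ)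
    (hs : 1 ≤ s) (hsp : s ≤ p - 1) (hs' : 1 ≤ s') (hs'p : s' ≤ p) :
    Iset p (p - s) s' = (Iset p s s').image (fun t => p - t) ∧ Iset p p s' = ∅ := by
  constructor
  · ext u
    simp only [Finset.mem_image, mem_Iset_iff]
    constructor
    · intro h
      exact ⟨p - u, by omega, by omega⟩
    · rintro ⟨t, ht, rfl⟩
      omega
  · ext t
    simp only [mem_Iset_iff, Finset.notMem_empty, iff_false]
    omega
end

section
/- For s, s', t ∈ {1,…,p}, if t ∈ I_{s,s'} then s' ∈ I_{s,t}. -/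
/-- For `s, s', t ∈ {1,…,p}`, if `t ∈ I_{s,s'}` then `s' ∈ I_{s,t}`. -/
theorem mem_Iset_symm (p : ℕ) (hp : 2 ≤ p) (s s' t : ℕ)
    (hs : 1 ≤ s) (hsp : s ≤ p) (hs' : 1 ≤ s') (hs'p : s' ≤ p)
    (ht : 1 ≤ t) (htp : t ≤ p) (h : t ∈ Iset p s s') : s' ∈ Iset p s t := by
  simp only [Iset, Finset.mem_filter, Finset.mem_image, Finset.mem_Icc] at h ⊢
  obtain ⟨⟨i, hi, hit⟩, hle⟩ := h
  exact ⟨⟨(s' + 1 - (max s t - min s t)) / 2, by omega, by omega⟩, by omega⟩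
end

section
/- Let V be an element of a left module Z over Ū_q(sl₂) such that Kv = ±q^{s-1}v, F^{p-1}v ≠ 0, and Ev = α F^{p-1}v for some s ∈ {1,…,p-1} and α ∈ k. Then the span of {F^n v : 0 ≤ n ≤ p-1} is a p-dimensional submodule of Z isomorphic to E_s^±(1;[1:α]). -/
open FreeAlgebra in
/-- The defining relations of the restricted quantum group `Ū_q(sl₂)` at a `2p`-th root of
unity, on the free algebra on four generators `E, F, K, K⁻¹` (indexed `0, 1, 2, 3`). -/
inductive URel (k : Type*) [Field k] (q : k) (p : ℕ) :
    FreeAlgebra k (Fin 4) → FreeAlgebra k (Fin 4) → Prop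
  | KKinv : URel k q p (ι k 2 * ι k 3) 1
  | KinvK : URel k q p (ι k 3 * ι k 2) 1
  | KE : URel k q p (ι k 2 * ι k 0 * ι k 3) (q ^ 2 • ι k 0)
  | KF : URel k q p (ι k 2 * ι k 1 * ι k 3) ((q ^ 2)⁻¹ • ι k 1)
  | EF : URel k q p (ι k 0 * ι k 1 - ι k 1 * ι k 0) ((q - q⁻¹)⁻¹ • (ι k 2 - ι k 3))
  | K2p : URel k q p (ι k 2 ^ (2 * p)) 1
  | Ep : URel k q p (ι k 0 ^ p) 0
  | Fp : URel k q p (ι k 1 ^ p) 0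

/-- The restricted quantum group `Ū_q(sl₂)`, presented by generators and relations. -/
def Ubar (k : Type*) [Field k] (q : k) (p : ℕ) : Type _ := RingQuot (URel k q p)

noncomputable instance (k : Type*) [Field k] (q : k) (p : ℕ) : Ring (Ubar k q p) :=
  inferInstanceAs (Ring (RingQuot (URel k q p)))

noncomputable instance (k : Type*) [Field k] (q : k) (p : ℕ) : Algebra k (Ubar k q p) :=
  inferInstanceAs (Algebra k (RingQuot (URel k q p)))

/-- The generator `E` of `Ū_q(sl₂)`. -/
noncomputable def UE (k : Type*) [Field k] (q : k) (p : ℕ) : Ubar k q p :=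
  RingQuot.mkAlgHom k (URel k q p) (FreeAlgebra.ι k 0)

/-- The generator `F` of `Ū_q(sl₂)`. -/
noncomputable def UF (k : Type*) [Field k] (q : k) (p : ℕ) : Ubar k q p :=
  RingQuot.mkAlgHom k (URel k q p) (FreeAlgebra.ι k 1)

/-- The generator `K` of `Ū_q(sl₂)`. -/
noncomputable def UK (k : Type*) [Field k] (q : k) (p : ℕ) : Ubar k q p :=
  RingQuot.mkAlgHom k (URel k q p) (FreeAlgebra.ι k 2)

/-- The generator `K⁻¹` of `Ū_q(sl₂)`. -/
noncomputable def UKinv (k : Type*) [Field k] (q : k) (p : ℕ) : Ubar k q p :=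
  RingQuot.mkAlgHom k (URel k q p) (FreeAlgebra.ι k 3)

/-- The quantum integer `[n] = (q^n - q^{-n})/(q - q^{-1})`. -/
noncomputable def qint {k : Type*} [Field k] (q : k) (n : ℤ) : k :=
  (q ^ n - q ^ (-n)) / (q - q⁻¹)

lemma qint_zero {k : Type*} [Field k] (q : k) : qint q 0 = 0 := by simp [qint]

lemma qint_neg {k : Type*} [Field k] (q : k) (n : ℤ) : qint q (-n) = - qint q n := by
  rw [qint, qint, neg_neg, ← neg_sub, neg_div]

lemma quantum_id {k : Type*} [Field k] (q : k) (hq0 : q ≠ 0) (n m : ℤ) :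
    qint q n * qint q (m - n) + qint q (m - 2 * n - 1) =
      qint q (n + 1) * qint q (m - (n + 1)) := by
  have hn : q ^ n ≠ 0 := zpow_ne_zero _ hq0
  have hm : q ^ m ≠ 0 := zpow_ne_zero _ hq0
  have hnum : (q^n - q^(-n)) * (q^(m-n) - q^(-(m-n)))
        + (q^(m-2*n-1) - q^(-(m-2*n-1))) * (q - q⁻¹)
      = (q^(n+1) - q^(-(n+1))) * (q^(m-(n+1)) - q^(-(m-(n+1)))) := by
    rw [show m - n = m + -n by ring, show m - 2*n - 1 = m + -n + -n + -1 by ring,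
        show m - (n+1) = m + -n + -1 by ring]
    simp only [neg_add, neg_neg, zpow_add₀ hq0, zpow_neg, zpow_one]
    set u := q ^ n with hu
    set w := q ^ m with hw
    field_simp
    ring_nf
  by_cases hd : q - q⁻¹ = 0
  · unfold qint; rw [hd]; simp
  unfold qint
  rw [div_mul_div_comm, div_mul_div_comm, ← hnum, add_div, mul_div_mul_right _ _ hd]

/-- If `v ∈ Z` satisfies `Kv = ±q^{s-1}v`, `F^{p-1}v ≠ 0` and `Ev = α F^{p-1}v`, then
`span{F^n v : 0 ≤ n ≤ p-1}` is a `p`-dimensional `Ū_q(sl₂)`-submodule of `Z`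
isomorphic to `E_s^±(1;[1:α])`. -/
theorem Ubar_E_module_generated (k : Type*) [Field k] [CharZero k] [IsAlgClosed k]
    (p : ℕ) (hp : 2 ≤ p) (q : k)
    (hq1 : q ^ (2 * p) = 1) (hq2 : ∀ m : ℕ, 0 < m → m < 2 * p → q ^ m ≠ 1)
    (Z : Type*) [AddCommGroup Z] [Module k Z]
    (ρ : Ubar k q p →ₐ[k] Module.End k Z)
    (s : ℕ) (hs : 1 ≤ s) (hsp : s ≤ p - 1) (ε α : k) (hε : ε = 1 ∨ ε = -1)
    (v : Z)
    (hK : ρ (UK k q p) v = (ε * q ^ ((s : ℤ) - 1)) • v)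
    (hF : (ρ (UF k q p) ^ (p - 1)) v ≠ 0)
    (hE : ρ (UE k q p) v = α • (ρ (UF k q p) ^ (p - 1)) v) :
    ∀ W : Submodule k Z,
      W = Submodule.span k (Set.range fun n : Fin p => (ρ (UF k q p) ^ (n : ℕ)) v) →
      (∀ u : Ubar k q p, ∀ w ∈ W, ρ u w ∈ W) ∧
      Module.finrank k W = p ∧
      ∃ (b : Fin s → Z) (x : Fin (p - s) → Z),
        LinearIndependent k (Sum.elim b x) ∧
        Submodule.span k (Set.range (Sum.elim b x)) = W ∧
        (∀ n : Fin s,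
          ρ (UK k q p) (b n) = (ε * q ^ ((s : ℤ) - 1 - 2 * (n : ℕ))) • b n) ∧
        (∀ m : Fin (p - s),
          ρ (UK k q p) (x m) = (-ε * q ^ ((p : ℤ) - s - 1 - 2 * (m : ℕ))) • x m) ∧
        (∀ n : Fin s,
          ρ (UE k q p) (b n) =
            if h : (n : ℕ) = 0 then α • x ⟨p - s - 1, by omega⟩
            else (ε * qint q (n : ℕ) * qint q ((s : ℤ) - (n : ℕ))) •
              b ⟨(n : ℕ) - 1, Nat.lt_of_le_of_lt (Nat.sub_le _ _) n.isLt⟩) ∧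
        (∀ m : Fin (p - s),
          ρ (UE k q p) (x m) =
            if h : (m : ℕ) = 0 then 0
            else (-ε * qint q (m : ℕ) * qint q ((p : ℤ) - s - (m : ℕ))) •
              x ⟨(m : ℕ) - 1, Nat.lt_of_le_of_lt (Nat.sub_le _ _) m.isLt⟩) ∧
        (∀ n : Fin s,
          ρ (UF k q p) (b n) =
            if h : (n : ℕ) = s - 1 then x ⟨0, by omega⟩
            else b ⟨(n : ℕ) + 1, by have := n.isLt; omega⟩) ∧
        (∀ m : Fin (p - s),
          ρ (UF k q p) (x m) =
            if h : (m : ℕ) = p - s - 1 then 0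
            else x ⟨(m : ℕ) + 1, by have := m.isLt; omega⟩) := by
  intro W hW
  have hp0 : 0 < p := by omega
  have hq0 : q ≠ 0 := by
    intro h
    rw [h, zero_pow (by omega : 2 * p ≠ 0)] at hq1
    exact zero_ne_one hq1
  have hqp : q ^ p = -1 := by
    have e : (q ^ p) ^ 2 = 1 := by rw [← pow_mul, mul_comm]; exact hq1
    have h2 : (q ^ p - 1) * (q ^ p + 1) = 0 := by linear_combination e
    rcases mul_eq_zero.mp h2 with h | h
    · exact absurd (sub_eq_zero.mp h) (hq2 p hp0 (by omega))
    · exact eq_neg_of_add_eq_zero_left h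
  have hqpz : q ^ (p : ℤ) = -1 := by rw [zpow_natCast]; exact hqp
  have hq2ne : q ^ 2 ≠ 1 := hq2 2 (by omega) (by omega)
  have hd : q - q⁻¹ ≠ 0 := by
    intro h
    apply hq2ne
    have h' : q = q⁻¹ := sub_eq_zero.mp h
    have hqq : q * q = 1 := by nth_rewrite 2 [h']; exact mul_inv_cancel₀ hq0
    rw [sq]; exact hqq
  have hε0 : ε ≠ 0 := by rcases hε with h | h <;> rw [h] <;> norm_num
  have hε2 : ε * ε = 1 := by rcases hε with h | h <;> rw [h] <;> norm_num
  have hεinv : ε⁻¹ = ε := inv_eq_of_mul_eq_one_right hε2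
  have hq2inv : q ^ (-2 : ℤ) = (q ^ 2)⁻¹ := by rw [zpow_neg]; norm_cast
  have qps : ∀ x : ℤ, qint q ((p : ℤ) - x) = qint q x := by
    intro x
    unfold qint
    rw [show -((p : ℤ) - x) = x + -(p : ℤ) by ring, show (p : ℤ) - x = (p : ℤ) + -x by ring,
        zpow_add₀ hq0 (p : ℤ) (-x), zpow_add₀ hq0 x (-(p : ℤ)), hqpz, zpow_neg q (p : ℤ),
        hqpz, inv_neg, inv_one]
    ring_nf
  set E' := ρ (UE k q p) with hE'
  set F' := ρ (UF k q p) with hF'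
  set K' := ρ (UK k q p) with hK'
  set L' := ρ (UKinv k q p) with hL'
  set ρ' : FreeAlgebra k (Fin 4) →ₐ[k] Module.End k Z :=
    ρ.comp (RingQuot.mkAlgHom k (URel k q p)) with hρ'
  have hrel : ∀ {a b : FreeAlgebra k (Fin 4)}, URel k q p a b → ρ' a = ρ' b := fun h =>
    congrArg (⇑ρ) (RingQuot.mkAlgHom_rel k h)
  have hEid : E' = ρ' (FreeAlgebra.ι k 0) := rfl
  have hFid : F' = ρ' (FreeAlgebra.ι k 1) := rfl
  have hKid : K' = ρ' (FreeAlgebra.ι k 2) := rfl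
  have hLid : L' = ρ' (FreeAlgebra.ι k 3) := rfl
  have hLK : L' * K' = 1 := by
    rw [hLid, hKid, ← map_mul, hrel (@URel.KinvK k _ q p), map_one]
  have hKFc : K' * F' * L' = (q ^ 2)⁻¹ • F' := by
    rw [hKid, hFid, hLid, ← map_mul, ← map_mul, hrel (@URel.KF k _ q p), map_smul]
  have hEFc : E' * F' - F' * E' = (q - q⁻¹)⁻¹ • (K' - L') := by
    rw [hEid, hFid, hKid, hLid, ← map_mul, ← map_mul, ← map_sub,
        hrel (@URel.EF k _ q p), map_smul, map_sub]
  have hFp : F' ^ p = 0 := by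
    rw [hFid, ← map_pow, hrel (@URel.Fp k _ q p), map_zero]
  have hEF2 : E' * F' = F' * E' + (q - q⁻¹)⁻¹ • (K' - L') := by
    rw [← hEFc]; abel
  have hKF2 : K' * F' = (q ^ 2)⁻¹ • (F' * K') := by
    have h1 : K' * F' * L' * K' = ((q ^ 2)⁻¹ • F') * K' := by rw [hKFc]
    rwa [mul_assoc (K' * F') L' K', hLK, mul_one, smul_mul_assoc] at h1
  have hFkill : ∀ n : ℕ, p ≤ n → (F' ^ n) v = 0 := by
    intro n hn
    rw [show n = (n - p) + p by omega, pow_add, hFp, mul_zero, LinearMap.zero_apply]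
  have hKeig : ∀ n : ℕ, K' ((F' ^ n) v) = (ε * q ^ ((s : ℤ) - 1 - 2 * (n : ℕ))) • (F' ^ n) v := by
    intro n
    induction n with
    | zero => simpa using hK
    | succ n ih =>
      have h1 : K' ((F' ^ (n + 1)) v) = (q ^ 2)⁻¹ • F' (K' ((F' ^ n) v)) := by
        rw [pow_succ', Module.End.mul_apply, ← Module.End.mul_apply K' F', hKF2,
            LinearMap.smul_apply, Module.End.mul_apply]
      rw [h1, ih, map_smul, smul_smul, ← Module.End.mul_apply, ← pow_succ']
      congr 1
      rw [show (s : ℤ) - 1 - 2 * ((n : ℕ) + 1 : ℕ) = (-2) + ((s : ℤ) - 1 - 2 * (n : ℕ)) by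
            push_cast; ring,
          zpow_add₀ hq0, hq2inv]
      ring
  have hLgen : ∀ (w : Z) (c : k), c ≠ 0 → K' w = c • w → L' w = c⁻¹ • w := by
    intro w c hc h
    have h1 : L' (K' w) = w := by rw [← Module.End.mul_apply, hLK, Module.End.one_apply]
    rw [h, map_smul] at h1
    calc L' w = c⁻¹ • (c • L' w) := by rw [smul_smul, inv_mul_cancel₀ hc, one_smul]
    _ = c⁻¹ • w := by rw [h1]
  have hLeig : ∀ n : ℕ,
      L' ((F' ^ n) v) = (ε * q ^ (-((s : ℤ) - 1 - 2 * (n : ℕ)))) • (F' ^ n) v := by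
    intro n
    rw [hLgen _ _ (mul_ne_zero hε0 (zpow_ne_zero _ hq0)) (hKeig n), mul_inv, hεinv, ← zpow_neg]
  have hEeig : ∀ n : ℕ, E' ((F' ^ n) v)
      = α • (F' ^ (p - 1 + n)) v
        + (ε * qint q (n : ℕ) * qint q ((s : ℤ) - (n : ℕ))) • (F' ^ (n - 1)) v := by
    intro n
    induction n with
    | zero => simpa [qint_zero] using hE
    | succ n ih =>
      have hshift : F' ((ε * qint q (n : ℕ) * qint q ((s : ℤ) - (n : ℕ))) • (F' ^ (n - 1)) v)
          = (ε * qint q (n : ℕ) * qint q ((s : ℤ) - (n : ℕ))) • (F' ^ n) v := by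
        cases n with
        | zero => simp [qint_zero]
        | succ m => rw [map_smul, Nat.succ_sub_one, ← Module.End.mul_apply, ← pow_succ']
      have hKLsub : K' ((F' ^ n) v) - L' ((F' ^ n) v)
          = (ε * (q ^ ((s : ℤ) - 1 - 2 * (n : ℕ)) - q ^ (-((s : ℤ) - 1 - 2 * (n : ℕ)))))
              • (F' ^ n) v := by
        rw [hKeig, hLeig, ← sub_smul, mul_sub]
      have step : E' ((F' ^ (n + 1)) v)
          = F' (E' ((F' ^ n) v))
            + ((q - q⁻¹)⁻¹ * (ε * (q ^ ((s : ℤ) - 1 - 2 * (n : ℕ))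
                - q ^ (-((s : ℤ) - 1 - 2 * (n : ℕ)))))) • (F' ^ n) v := by
        have h0 : E' ((F' ^ (n + 1)) v) = (E' * F') ((F' ^ n) v) := by
          rw [pow_succ', Module.End.mul_apply, Module.End.mul_apply]
        rw [h0, hEF2, LinearMap.add_apply, Module.End.mul_apply, LinearMap.smul_apply,
            LinearMap.sub_apply, hKLsub, smul_smul]
      rw [step, ih, map_add, map_smul, hshift, ← Module.End.mul_apply, ← pow_succ',
          add_assoc, ← add_smul]
      congr 1
      rw [Nat.add_sub_cancel]
      congr 1
      have hq1' : (q - q⁻¹)⁻¹ * (ε * (q ^ ((s : ℤ) - 1 - 2 * (n : ℕ))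
          - q ^ (-((s : ℤ) - 1 - 2 * (n : ℕ)))))
          = ε * qint q ((s : ℤ) - 2 * (n : ℕ) - 1) := by
        rw [show (s : ℤ) - 1 - 2 * (n : ℕ) = (s : ℤ) - 2 * (n : ℕ) - 1 by ring]
        unfold qint
        field_simp
      rw [hq1']
      have hqid := quantum_id q hq0 ((n : ℕ) : ℤ) ((s : ℕ) : ℤ)
      push_cast
      linear_combination ε * hqid
  have hmemW : ∀ n : ℕ, (F' ^ n) v ∈ W := by
    intro n
    by_cases hn : n < p
    · rw [hW]; exact Submodule.subset_span ⟨⟨n, hn⟩, rfl⟩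
    · rw [hFkill n (by omega)]; exact W.zero_mem
  have hstab : ∀ A : Module.End k Z, (∀ n : ℕ, A ((F' ^ n) v) ∈ W) → ∀ w ∈ W, A w ∈ W := by
    intro A hA w hw
    rw [hW] at hw
    induction hw using Submodule.span_induction with
    | mem y hy => obtain ⟨i, rfl⟩ := hy; exact hA i
    | zero => rw [map_zero]; exact W.zero_mem
    | add y z hy hz ihy ihz => rw [map_add]; exact W.add_mem ihy ihz
    | smul c y hy ihy => rw [map_smul]; exact W.smul_mem c ihy
  have hFstab : ∀ n : ℕ, F' ((F' ^ n) v) ∈ W := fun n => by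
    rw [← Module.End.mul_apply, ← pow_succ']; exact hmemW (n + 1)
  have hKstab : ∀ n : ℕ, K' ((F' ^ n) v) ∈ W := fun n => by
    rw [hKeig]; exact W.smul_mem _ (hmemW n)
  have hLstab : ∀ n : ℕ, L' ((F' ^ n) v) ∈ W := fun n => by
    rw [hLeig]; exact W.smul_mem _ (hmemW n)
  have hEstab : ∀ n : ℕ, E' ((F' ^ n) v) ∈ W := fun n => by
    rw [hEeig]; exact W.add_mem (W.smul_mem _ (hmemW _)) (W.smul_mem _ (hmemW _))
  have hUinv : ∀ u : Ubar k q p, ∀ w ∈ W, ρ u w ∈ W := by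
    intro u
    obtain ⟨a, rfl⟩ := RingQuot.mkAlgHom_surjective k (URel k q p) u
    induction a using FreeAlgebra.induction with
    | grade0 r =>
      intro w hw
      have e1 : ρ (RingQuot.mkAlgHom k (URel k q p) (algebraMap k (FreeAlgebra k (Fin 4)) r))
          = ρ (algebraMap k (Ubar k q p) r) :=
        congrArg (⇑ρ) ((RingQuot.mkAlgHom k (URel k q p)).commutes r)
      have e2 : ρ (algebraMap k (Ubar k q p) r) = algebraMap k (Module.End k Z) r :=
        ρ.commutes r
      rw [e1, e2, Module.algebraMap_end_apply]
      exact W.smul_mem r hw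
    | grade1 i =>
      fin_cases i
      · exact hstab E' hEstab
      · exact hstab F' hFstab
      · exact hstab K' hKstab
      · exact hstab L' hLstab
    | mul a b iha ihb =>
      intro w hw
      rw [show ρ (RingQuot.mkAlgHom k (URel k q p) (a * b)) = ρ (RingQuot.mkAlgHom k (URel k q p) a) * ρ (RingQuot.mkAlgHom k (URel k q p) b) from map_mul ρ' a b, Module.End.mul_apply]
      exact iha _ (ihb w hw)
    | add a b iha ihb =>
      intro w hw
      rw [show ρ (RingQuot.mkAlgHom k (URel k q p) (a + b)) = ρ (RingQuot.mkAlgHom k (URel k q p) a) + ρ (RingQuot.mkAlgHom k (URel k q p) b) from map_add ρ' a b, LinearMap.add_apply]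
      exact W.add_mem (iha w hw) (ihb w hw)
  have hgli : LinearIndependent k (fun i : Fin p => (F' ^ (i : ℕ)) v) := by
    rw [Fintype.linearIndependent_iff]
    intro c hc
    suffices H : ∀ j : ℕ, ∀ hj : j < p, c ⟨j, hj⟩ = 0 by
      exact fun i => H i.1 i.2
    intro j
    induction j using Nat.strong_induction_on with
    | _ j IH =>
      intro hj
      have h0 : (F' ^ (p - 1 - j)) (∑ i : Fin p, c i • (F' ^ (i : ℕ)) v) = 0 := by
        rw [hc, map_zero]
      rw [map_sum] at h0
      have h1 : ∀ i : Fin p,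
          (F' ^ (p - 1 - j)) (c i • (F' ^ (i : ℕ)) v) = c i • (F' ^ (p - 1 - j + (i : ℕ))) v := by
        intro i; rw [map_smul, ← Module.End.mul_apply, ← pow_add]
      rw [Finset.sum_congr rfl (fun i _ => h1 i)] at h0
      rw [Finset.sum_eq_single (⟨j, hj⟩ : Fin p)] at h0
      · rw [show p - 1 - j + j = p - 1 by omega] at h0
        rcases smul_eq_zero.mp h0 with h | h
        · exact h
        · exact absurd h hF
      · intro i _ hne
        have hne' : (i : ℕ) ≠ j := fun he => hne (Fin.ext he)
        rcases hne'.lt_or_gt with hlt | hgt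
        · rw [show c i = 0 from IH i.1 hlt i.2, zero_smul]
        · rw [hFkill (p - 1 - j + (i : ℕ)) (by omega), smul_zero]
      · intro hmem
        exact absurd (Finset.mem_univ _) hmem
  have hfin : Module.finrank k (↥W) = p := by
    rw [hW]
    have h := finrank_span_eq_card (R := k) hgli
    simpa using h
  set e : Fin s ⊕ Fin (p - s) → Fin p :=
    Sum.elim (fun n => ⟨(n : ℕ), by have := n.isLt; omega⟩)
      (fun m => ⟨s + (m : ℕ), by have := m.isLt; omega⟩) with he
  have hcomp : Sum.elim (fun n : Fin s => (F' ^ (n : ℕ)) v)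
      (fun m : Fin (p - s) => (F' ^ (s + (m : ℕ))) v)
      = (fun i : Fin p => (F' ^ (i : ℕ)) v) ∘ e := by
    funext i
    cases i with
    | inl a => rfl
    | inr a => rfl
  have einj : Function.Injective e := by
    rintro (a | a) (c | c) h <;>
      rw [he] at h <;>
      simp only [Sum.elim_inl, Sum.elim_inr, Fin.mk.injEq] at h
    · exact congrArg Sum.inl (Fin.ext h)
    · exact absurd h (by have := a.isLt; omega)
    · exact absurd h (by have := c.isLt; omega)
    · exact congrArg Sum.inr (Fin.ext (by omega))
  have hesurj : Function.Surjective e := by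
    intro i
    by_cases hi : (i : ℕ) < s
    · exact ⟨Sum.inl ⟨(i : ℕ), hi⟩, Fin.ext rfl⟩
    · refine ⟨Sum.inr ⟨(i : ℕ) - s, by have := i.isLt; omega⟩, Fin.ext ?_⟩
      show s + ((i : ℕ) - s) = (i : ℕ)
      omega
  refine ⟨hUinv, hfin, fun n : Fin s => (F' ^ (n : ℕ)) v,
      fun m : Fin (p - s) => (F' ^ (s + (m : ℕ))) v, ?_, ?_, ?_, ?_, ?_, ?_, ?_, ?_⟩
  · rw [hcomp]
    exact hgli.comp e einj
  · rw [hcomp, Set.range_comp, hesurj.range_eq, Set.image_univ, hW]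
  · intro n
    exact hKeig (n : ℕ)
  · intro m
    have h := hKeig (s + (m : ℕ))
    have hco : ε * q ^ ((s : ℤ) - 1 - 2 * ((s + (m : ℕ) : ℕ) : ℤ))
        = -ε * q ^ ((p : ℤ) - s - 1 - 2 * (m : ℕ)) := by
      rw [show (p : ℤ) - s - 1 - 2 * (m : ℕ) = (p : ℤ) + (-(s : ℤ) - 1 - 2 * (m : ℕ)) by ring,
          zpow_add₀ hq0, hqpz,
          show (s : ℤ) - 1 - 2 * ((s + (m : ℕ) : ℕ) : ℤ) = -(s : ℤ) - 1 - 2 * (m : ℕ) by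
            push_cast; ring]
      ring
    rw [hco] at h
    exact h
  · intro n
    by_cases hn0 : (n : ℕ) = 0
    · rw [dif_pos hn0]
      show E' ((F' ^ (n : ℕ)) v) = α • (F' ^ (s + (p - s - 1))) v
      rw [hn0, pow_zero, Module.End.one_apply, show s + (p - s - 1) = p - 1 by omega, hE]
    · rw [dif_neg hn0]
      show E' ((F' ^ (n : ℕ)) v)
          = (ε * qint q (n : ℕ) * qint q ((s : ℤ) - (n : ℕ))) • (F' ^ ((n : ℕ) - 1)) v
      have h := hEeig (n : ℕ)
      rw [hFkill (p - 1 + (n : ℕ)) (by omega), smul_zero, zero_add] at h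
      exact h
  · intro m
    by_cases hm0 : (m : ℕ) = 0
    · rw [dif_pos hm0]
      show E' ((F' ^ (s + (m : ℕ))) v) = 0
      rw [hm0]
      have h := hEeig (s + 0)
      rw [hFkill (p - 1 + (s + 0)) (by omega), smul_zero, zero_add] at h
      rw [h, show ((s : ℤ) - ((s + 0 : ℕ) : ℤ)) = 0 by push_cast; ring, qint_zero,
          mul_zero, zero_smul]
    · rw [dif_neg hm0]
      show E' ((F' ^ (s + (m : ℕ))) v)
          = (-ε * qint q (m : ℕ) * qint q ((p : ℤ) - s - (m : ℕ)))
              • (F' ^ (s + ((m : ℕ) - 1))) v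
      have h := hEeig (s + (m : ℕ))
      rw [hFkill (p - 1 + (s + (m : ℕ))) (by omega), smul_zero, zero_add] at h
      have hco : ε * qint q ((s + (m : ℕ) : ℕ) : ℤ) * qint q ((s : ℤ) - ((s + (m : ℕ) : ℕ) : ℤ))
          = -ε * qint q (m : ℕ) * qint q ((p : ℤ) - s - (m : ℕ)) := by
        rw [show ((s : ℤ) - ((s + (m : ℕ) : ℕ) : ℤ)) = -((m : ℕ) : ℤ) by push_cast; ring,
            qint_neg,
            show (((s + (m : ℕ) : ℕ)) : ℤ) = (p : ℤ) - ((p : ℤ) - s - (m : ℕ)) by push_cast; ring,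
            qps]
        ring
      rw [hco, show s + (m : ℕ) - 1 = s + ((m : ℕ) - 1) by omega] at h
      exact h
  · intro n
    by_cases hn : (n : ℕ) = s - 1
    · rw [dif_pos hn]
      show F' ((F' ^ (n : ℕ)) v) = (F' ^ (s + 0)) v
      rw [hn, ← Module.End.mul_apply, ← pow_succ', show s - 1 + 1 = s + 0 by omega]
    · rw [dif_neg hn]
      show F' ((F' ^ (n : ℕ)) v) = (F' ^ ((n : ℕ) + 1)) v
      rw [← Module.End.mul_apply, ← pow_succ']
  · intro m
    by_cases hm : (m : ℕ) = p - s - 1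
    · rw [dif_pos hm]
      show F' ((F' ^ (s + (m : ℕ))) v) = 0
      rw [hm, ← Module.End.mul_apply, ← pow_succ', show s + (p - s - 1) + 1 = p by omega]
      exact hFkill p le_rfl
    · rw [dif_neg hm]
      show F' ((F' ^ (s + (m : ℕ))) v) = (F' ^ (s + ((m : ℕ) + 1))) v
      rw [← Module.End.mul_apply, ← pow_succ', show s + (m : ℕ) + 1 = s + ((m : ℕ) + 1) by omega]
end
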